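/- Let M be a collection of perfect matchings of the complete t-uniform hypergraph on tn vertices in which each t-element edge appears in at most k members. For a fixed member M_i and a fixed x-matching X ⊆ M_i, the number of pairs (M_{i'}, X') with M_{i'} ∈ M, X' an x-matching contained in M_{i'}, and X' meeting the vertex set of X, is at most k · tx · C(tn-1, t-1) · C(n-1, x-1). -/

import Mathlib

open Finset

/-- A perfect matching of the complete `t`-uniform hypergraph on the vertex set `V`. -/
def IsHPerfectMatching {V : Type} [DecidableEq V] (t : ℕ) (M : Finset (Finset V)) : Prop :=
  (∀ e ∈ M, e.card = t) ∧ (M : Set (Finset V)).Pairwise Disjoint ∧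
    ∀ v : V, ∃ e ∈ M, v ∈ e

theorem hypergraphDependencyDegreeBound (t n x s k : ℕ)
    (M : Fin s → Finset (Finset (Fin (t*n)))) (hM : ∀ i, IsHPerfectMatching t (M i))
    (hk : ∀ e : Finset (Fin (t*n)), e.card = t →
      (Finset.univ.filter (fun i => e ∈ M i)).card ≤ k)
    (i : Fin s) (X : Finset (Finset (Fin (t*n)))) (hXsub : X ⊆ M i) (hXcard : X.card = x) :
    Nat.card {p : Fin s × Finset (Finset (Fin (t*n))) //
        p.2 ⊆ M p.1 ∧ p.2.card = x ∧
        ∃ v : Fin (t*n), (∃ e ∈ X, v ∈ e) ∧ (∃ e ∈ p.2, v ∈ e)}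
      ≤ k * (t*x) * ((t*n - 1).choose (t-1)) * ((n-1).choose (x-1)) := by
  classical
  by_cases ht : t = 0
  · subst ht
    haveI : IsEmpty (Fin (0 * n)) := by rw [Nat.zero_mul]; infer_instance
    haveI : IsEmpty {p : Fin s × Finset (Finset (Fin (0*n))) //
        p.2 ⊆ M p.1 ∧ p.2.card = x ∧
        ∃ v : Fin (0*n), (∃ e ∈ X, v ∈ e) ∧ (∃ e ∈ p.2, v ∈ e)} :=
      ⟨fun ⟨_, _, _, v, _⟩ => IsEmpty.false v⟩
    simp [Nat.card_of_isEmpty]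
  have ht' : 0 < t := Nat.pos_of_ne_zero ht
  set P : Fin s × Finset (Finset (Fin (t*n))) → Prop := fun p =>
    p.2 ⊆ M p.1 ∧ p.2.card = x ∧
      ∃ v : Fin (t*n), (∃ e ∈ X, v ∈ e) ∧ (∃ e ∈ p.2, v ∈ e) with hPdef
  rw [Nat.card_eq_fintype_card, Fintype.card_subtype]
  have hdisj : ∀ j : Fin s, ∀ a ∈ M j, ∀ b ∈ M j, a ≠ b → Disjoint (id a) (id b) :=
    fun j a ha b hb hab => (hM j).2.1 (Finset.mem_coe.2 ha) (Finset.mem_coe.2 hb) hab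
  -- each perfect matching has exactly n edges
  have hMn : ∀ j : Fin s, (M j).card = n := by
    intro j
    have hcov : (M j).biUnion id = univ := by
      apply eq_univ_of_forall
      intro v
      obtain ⟨e, he, hv⟩ := (hM j).2.2 v
      exact mem_biUnion.2 ⟨e, he, hv⟩
    have hb := card_biUnion (hdisj j)
    rw [hcov, card_univ, Fintype.card_fin] at hb
    have hsum : ∑ e ∈ M j, (id e).card = t * (M j).card := by
      calc ∑ e ∈ M j, (id e).card = ∑ _e ∈ M j, t := Finset.sum_congr rfl (hM j).1
        _ = (M j).card * t := by rw [Finset.sum_const, smul_eq_mul]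
        _ = t * (M j).card := mul_comm _ _
    rw [hsum] at hb
    exact (Nat.eq_of_mul_eq_mul_left ht' hb.symm)
  -- vertex set of X is small
  have hVX : (X.biUnion id).card ≤ t * x := by
    calc (X.biUnion id).card ≤ ∑ e ∈ X, (id e).card := card_biUnion_le
      _ = ∑ _e ∈ X, t := Finset.sum_congr rfl fun e he => (hM i).1 e (hXsub he)
      _ = x * t := by rw [Finset.sum_const, smul_eq_mul, hXcard]
      _ = t * x := mul_comm _ _
  -- number of t-edges through a fixed vertex
  have hEv : ∀ v : Fin (t*n),
      (univ.filter fun e : Finset (Fin (t*n)) => v ∈ e ∧ e.card = t).card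
        ≤ (t*n - 1).choose (t-1) := by
    intro v
    have h1 : (univ.filter fun e : Finset (Fin (t*n)) => v ∈ e ∧ e.card = t).card
        ≤ (((univ : Finset (Fin (t*n))).erase v).powersetCard (t-1)).card := by
      apply Finset.card_le_card_of_injOn (fun e => e.erase v)
      · intro e he
        rw [mem_coe, mem_filter] at he
        rw [mem_coe, mem_powersetCard]
        refine ⟨fun a ha => mem_erase.2 ⟨(mem_erase.1 ha).1, mem_univ a⟩, ?_⟩
        rw [card_erase_of_mem he.2.1, he.2.2]
      · intro e1 h1 e2 h2 h12
        simp only [coe_filter, Set.mem_setOf_eq] at h1 h2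
        rw [← insert_erase h1.2.1, ← insert_erase h2.2.1]
        exact congrArg (insert v) h12
    rwa [card_powersetCard, card_erase_of_mem (mem_univ v), card_univ,
      Fintype.card_fin] at h1
  -- the fiber bound
  have hfiber : ∀ e : Finset (Fin (t*n)), e.card = t →
      ((univ.filter P).filter fun p => e ∈ p.2).card ≤ k * (n-1).choose (x-1) := by
    intro e hecard
    have hsub : (univ.filter P).filter (fun p => e ∈ p.2) ⊆
        (univ.filter fun j => e ∈ M j).biUnion fun j =>
          (((M j).powersetCard x).filter fun Y => e ∈ Y).image fun Y => (j, Y) := by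
      intro p hp
      simp only [mem_filter, mem_univ, true_and, hPdef] at hp
      obtain ⟨⟨hsubM, hcard, -⟩, heX'⟩ := hp
      apply mem_biUnion.2
      refine ⟨p.1, ?_, ?_⟩
      · simp only [mem_filter, mem_univ, true_and]
        exact hsubM heX'
      · exact mem_image.2 ⟨p.2, by simp [mem_filter, mem_powersetCard, hsubM, hcard, heX'], rfl⟩
    have hinner : ∀ j : Fin s, e ∈ M j →
        (((M j).powersetCard x).filter fun Y => e ∈ Y).card ≤ (n-1).choose (x-1) := by
      intro j hjM
      have h1 : (((M j).powersetCard x).filter fun Y => e ∈ Y).card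
          ≤ (((M j).erase e).powersetCard (x-1)).card := by
        apply Finset.card_le_card_of_injOn (fun Y => Y.erase e)
        · intro Y hY
          simp only [mem_coe, mem_filter, mem_powersetCard] at hY
          rw [mem_coe, mem_powersetCard]
          refine ⟨fun a ha => mem_erase.2 ⟨(mem_erase.1 ha).1, hY.1.1 (mem_erase.1 ha).2⟩, ?_⟩
          rw [card_erase_of_mem hY.2, hY.1.2]
        · intro Y1 hY1 Y2 hY2 h12
          simp only [coe_filter, Set.mem_setOf_eq] at hY1 hY2
          rw [← insert_erase hY1.2, ← insert_erase hY2.2]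
          exact congrArg (insert e) h12
      rwa [card_powersetCard, card_erase_of_mem hjM, hMn j] at h1
    calc ((univ.filter P).filter fun p => e ∈ p.2).card
        ≤ ∑ j ∈ univ.filter (fun j => e ∈ M j),
            ((((M j).powersetCard x).filter fun Y => e ∈ Y).image fun Y => (j, Y)).card :=
          le_trans (card_le_card hsub) card_biUnion_le
      _ ≤ ∑ j ∈ univ.filter (fun j => e ∈ M j), (n-1).choose (x-1) := by
          apply Finset.sum_le_sum
          intro j hj
          exact le_trans card_image_le (hinner j (mem_filter.1 hj).2)
      _ = (univ.filter fun j => e ∈ M j).card * (n-1).choose (x-1) := by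
          rw [Finset.sum_const, smul_eq_mul]
      _ ≤ k * (n-1).choose (x-1) := Nat.mul_le_mul_right _ (hk e hecard)
  -- covering
  have hcover : (univ.filter P) ⊆ (X.biUnion id).biUnion fun v =>
      (univ.filter fun e : Finset (Fin (t*n)) => v ∈ e ∧ e.card = t).biUnion fun e =>
        (univ.filter P).filter fun p => e ∈ p.2 := by
    intro p hp
    have hp' := (mem_filter.1 hp).2
    obtain ⟨hsubM, hcard, v, ⟨eX, heX, hveX⟩, e, hep, hve⟩ := hp'
    apply mem_biUnion.2
    refine ⟨v, mem_biUnion.2 ⟨eX, heX, hveX⟩, ?_⟩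
    apply mem_biUnion.2
    refine ⟨e, ?_, mem_filter.2 ⟨hp, hep⟩⟩
    simp only [mem_filter, mem_univ, true_and]
    exact ⟨hve, (hM p.1).1 e (hsubM hep)⟩
  calc (univ.filter P).card
      ≤ ∑ v ∈ X.biUnion id,
          ((univ.filter fun e : Finset (Fin (t*n)) => v ∈ e ∧ e.card = t).biUnion fun e =>
            (univ.filter P).filter fun p => e ∈ p.2).card :=
        le_trans (card_le_card hcover) card_biUnion_le
    _ ≤ ∑ v ∈ X.biUnion id,
          ∑ e ∈ univ.filter (fun e : Finset (Fin (t*n)) => v ∈ e ∧ e.card = t),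
            ((univ.filter P).filter fun p => e ∈ p.2).card :=
        Finset.sum_le_sum fun v _ => card_biUnion_le
    _ ≤ ∑ v ∈ X.biUnion id,
          ∑ _e ∈ univ.filter (fun e : Finset (Fin (t*n)) => v ∈ e ∧ e.card = t),
            k * (n-1).choose (x-1) := by
        apply Finset.sum_le_sum; intro v _; apply Finset.sum_le_sum; intro e he
        exact hfiber e (mem_filter.1 he).2.2
    _ = ∑ v ∈ X.biUnion id,
          (univ.filter fun e : Finset (Fin (t*n)) => v ∈ e ∧ e.card = t).card *
            (k * (n-1).choose (x-1)) := by
        simp [Finset.sum_const, smul_eq_mul]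
    _ ≤ ∑ _v ∈ X.biUnion id, (t*n-1).choose (t-1) * (k * (n-1).choose (x-1)) :=
        Finset.sum_le_sum fun v _ => Nat.mul_le_mul_right _ (hEv v)
    _ = (X.biUnion id).card * ((t*n-1).choose (t-1) * (k * (n-1).choose (x-1))) := by
        rw [Finset.sum_const, smul_eq_mul]
    _ ≤ (t*x) * ((t*n-1).choose (t-1) * (k * (n-1).choose (x-1))) :=
        Nat.mul_le_mul_right _ hVX
    _ = k * (t*x) * ((t*n - 1).choose (t-1)) * ((n-1).choose (x-1)) := by ring
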